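/- Under the same hypotheses (equations 2nd), for every ζ ∈ ℂ, W(ζ) = (B₀+B₁ζ)(A₀+A₁ζ) satisfies W' = [W_#, W] where W_# = (1/2)(B₀A₁ + B₁A₀) + B₁A₁ζ. -/

import Mathlib

open Matrix

attribute [local instance] Matrix.normedAddCommGroup Matrix.normedSpace

noncomputable def mulCLM (m n p : ℕ) :
    Matrix (Fin m) (Fin n) ℂ →L[ℝ] Matrix (Fin n) (Fin p) ℂ →L[ℝ] Matrix (Fin m) (Fin p) ℂ :=
  LinearMap.toContinuousLinearMap
    ((LinearMap.toContinuousLinearMap :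
        (Matrix (Fin n) (Fin p) ℂ →ₗ[ℝ] Matrix (Fin m) (Fin p) ℂ) ≃ₗ[ℝ] _).toLinearMap.comp
      (LinearMap.mk₂ ℝ (fun X Y => X * Y) (fun X₁ X₂ Y => Matrix.add_mul X₁ X₂ Y)
        (fun c X Y => Matrix.smul_mul c X Y) (fun X Y₁ Y₂ => Matrix.mul_add X Y₁ Y₂)
        (fun c X Y => Matrix.mul_smul X c Y)))

@[simp] lemma mulCLM_apply (m n p : ℕ) (X : Matrix (Fin m) (Fin n) ℂ)
    (Y : Matrix (Fin n) (Fin p) ℂ) : mulCLM m n p X Y = X * Y := rfl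

lemma hasDerivAt_matmul {m n p : ℕ} {B : ℝ → Matrix (Fin m) (Fin n) ℂ}
    {A : ℝ → Matrix (Fin n) (Fin p) ℂ} {B' A'} {t : ℝ}
    (hB : HasDerivAt B B' t) (hA : HasDerivAt A A' t) :
    HasDerivAt (fun s => B s * A s) (B' * A t + B t * A') t := by
  have hbl := (mulCLM m n p).isBoundedBilinearMap
  have h := (hbl.hasFDerivAt (B t, A t)).comp_hasDerivAt t (hB.prodMk hA)
  rw [add_comm]
  exact h
/-- Solutions of the system (2nd) give, for each spectral parameter `ζ`, a Lax
equation `W' = [W_#, W]` for `W(ζ) = (B₀+B₁ζ)(A₀+A₁ζ)`. -/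
theorem system2nd_implies_lax_W (n m : ℕ)
    (A₀ A₁ : ℝ → Matrix (Fin n) (Fin m) ℂ) (B₀ B₁ : ℝ → Matrix (Fin m) (Fin n) ℂ)
    (hA₀ : ∀ t, HasDerivAt A₀ ((1 / 2 : ℂ) •
      (A₁ t * B₀ t * A₀ t - A₀ t * B₀ t * A₁ t)) t)
    (hA₁ : ∀ t, HasDerivAt A₁ ((1 / 2 : ℂ) •
      (A₁ t * B₁ t * A₀ t - A₀ t * B₁ t * A₁ t)) t)
    (hB₀ : ∀ t, HasDerivAt B₀ ((1 / 2 : ℂ) •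
      (B₁ t * A₀ t * B₀ t - B₀ t * A₀ t * B₁ t)) t)
    (hB₁ : ∀ t, HasDerivAt B₁ ((1 / 2 : ℂ) •
      (B₁ t * A₁ t * B₀ t - B₀ t * A₁ t * B₁ t)) t) :
    ∀ (ζ : ℂ) (t : ℝ), HasDerivAt
      (fun s => (B₀ s + ζ • B₁ s) * (A₀ s + ζ • A₁ s))
      (((1 / 2 : ℂ) • (B₀ t * A₁ t + B₁ t * A₀ t) + ζ • (B₁ t * A₁ t)) *
          ((B₀ t + ζ • B₁ t) * (A₀ t + ζ • A₁ t))
        - ((B₀ t + ζ • B₁ t) * (A₀ t + ζ • A₁ t)) *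
          ((1 / 2 : ℂ) • (B₀ t * A₁ t + B₁ t * A₀ t) + ζ • (B₁ t * A₁ t))) t := by
  intro ζ t
  have hB : HasDerivAt (fun s => B₀ s + ζ • B₁ s)
      ((1 / 2 : ℂ) • (B₁ t * A₀ t * B₀ t - B₀ t * A₀ t * B₁ t) +
        ζ • ((1 / 2 : ℂ) • (B₁ t * A₁ t * B₀ t - B₀ t * A₁ t * B₁ t))) t :=
    (hB₀ t).add ((hB₁ t).const_smul ζ)
  have hA : HasDerivAt (fun s => A₀ s + ζ • A₁ s)
      ((1 / 2 : ℂ) • (A₁ t * B₀ t * A₀ t - A₀ t * B₀ t * A₁ t) +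
        ζ • ((1 / 2 : ℂ) • (A₁ t * B₁ t * A₀ t - A₀ t * B₁ t * A₁ t))) t :=
    (hA₀ t).add ((hA₁ t).const_smul ζ)
  have h := hasDerivAt_matmul hB hA
  convert h using 1
  simp only [Matrix.mul_add, Matrix.add_mul, Matrix.smul_mul, Matrix.mul_smul,
    smul_add, smul_sub, Matrix.sub_mul, Matrix.mul_sub, smul_smul, Matrix.mul_assoc]
  module
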